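/- Let F : 𝒫(δ) → 𝒫(δ) be defined on strings P = (a₁,...,aₙ) with at least δ distinct characters by: F(P) = P if a₁ occurs exactly once in the prefix of P ending at the first occurrence of the (δ/2)-th distinct character; otherwise F(P) = (b₁, a₂, ..., aₙ), where b₁ is the first occurrence of the (δ/2 + r)-th distinct character of P and r is the lexical rank of a₁ among the first δ/2 distinct characters of P. Then every string Q in the image of F has the same multiset-support size (number of distinct characters) at least δ, and each Q in the image has at most two preimages under F, one of which is Q itself; consequently |F(𝒫(δ))| ≥ |𝒫(δ)|/2. -/

import Mathlib

/-- The list of distinct characters of `P` in order of first occurrence. -/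
def firsts {α : Type*} [DecidableEq α] (P : List α) : List α :=
  P.reverse.dedup.reverse

/-- The map `F` of the paper: if the first character `a` of `P` occurs exactly once in the prefix
of `P` ending at the first occurrence of the `(δ/2)`-th distinct character, then `F P = P`;
otherwise the first character is replaced by `b`, the `(δ/2 + r)`-th distinct character of `P`,
where `r` is the lexical rank of `a` among the first `δ/2` distinct characters of `P`. -/
def Fmap {α : Type*} [LinearOrder α] (δ : ℕ) (P : List α) : List α :=
  match P with
  | [] => []
  | a :: t =>
    let d := firsts (a :: t)
    let half := δ / 2
    let pos := (a :: t).idxOf (d.getD (half - 1) a)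
    if ((a :: t).take (pos + 1)).count a = 1 then a :: t
    else
      let r := (d.take half |>.filter (· ≤ a)).length
      (d.getD (half + r - 1) a) :: t

open List

section DE
variable {α : Type*} [DecidableEq α]

lemma firsts_nodup (P : List α) : (firsts P).Nodup :=
  List.nodup_reverse.2 (List.nodup_dedup _)

@[simp] lemma mem_firsts {x : α} {P : List α} : x ∈ firsts P ↔ x ∈ P := by
  simp [firsts]

@[simp] lemma length_firsts (P : List α) : (firsts P).length = P.dedup.length := by
  rw [firsts, List.length_reverse]
  exact (List.reverse_perm P).dedup.length_eq

lemma dedup_append_singleton (a : α) (l : List α) :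
    (l ++ [a]).dedup = l.dedup.filter (· ≠ a) ++ [a] := by
  induction l with
  | nil => simp
  | cons b l ih =>
    by_cases hb : b ∈ l
    · rw [cons_append, dedup_cons_of_mem (by simp [hb]), ih, dedup_cons_of_mem hb]
    · by_cases hba : b = a
      · subst hba
        rw [cons_append, dedup_cons_of_mem (by simp), ih, dedup_cons_of_notMem hb]
        simp
      · rw [cons_append, dedup_cons_of_notMem (by simp [hb, hba]), ih,
          dedup_cons_of_notMem hb, filter_cons_of_pos (by simp [hba]), cons_append]

lemma firsts_cons (a : α) (t : List α) :
    firsts (a :: t) = a :: (firsts t).filter (· ≠ a) := by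
  rw [firsts, reverse_cons, dedup_append_singleton, reverse_append, ← filter_reverse]
  rfl

lemma firsts_pairwise (t : List α) :
    (firsts t).Pairwise (fun y z => t.idxOf y < t.idxOf z) := by
  induction t with
  | nil => simp [firsts]
  | cons a t ih =>
    rw [firsts_cons]
    refine List.Pairwise.cons ?_ ?_
    · intro z hz
      have hz' : z ≠ a := by
        have := List.of_mem_filter hz; simpa using this
      rw [List.idxOf_cons_self, List.idxOf_cons_ne _ (Ne.symm hz')]
      exact Nat.succ_pos _
    · have hsub : ((firsts t).filter (· ≠ a)).Sublist (firsts t) := List.filter_sublist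
      have hp := ih.sublist hsub
      refine hp.imp_of_mem ?_
      intro y z hy hz hyz
      have hy' : y ≠ a := by have := List.of_mem_filter hy; simpa using this
      have hz' : z ≠ a := by have := List.of_mem_filter hz; simpa using this
      rw [List.idxOf_cons_ne _ (Ne.symm hy'), List.idxOf_cons_ne _ (Ne.symm hz')]
      exact Nat.succ_lt_succ hyz

lemma firsts_indexOf_mono {t : List α} {i j : ℕ} (hj : j < (firsts t).length)
    (hij : i < j) : t.idxOf (firsts t)[i] < t.idxOf (firsts t)[j] :=
  (List.pairwise_iff_getElem.1 (firsts_pairwise t)) i j (hij.trans hj) hj hij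

lemma mem_take_iff_indexOf_lt : ∀ {l : List α} {m : ℕ} {x : α}, m ≤ l.length →
    (x ∈ l.take m ↔ l.idxOf x < m)
  | l, 0, x, _ => by simp
  | [], m+1, x, h => by simp at h
  | b :: l, m+1, x, h => by
    rw [List.take_succ_cons, List.mem_cons]
    by_cases hxb : x = b
    · subst hxb
      simp only [true_or, List.idxOf_cons_self, true_iff]
      omega
    · rw [List.idxOf_cons_ne _ (fun h' => hxb h'.symm)]
      simp only [hxb, false_or]
      rw [mem_take_iff_indexOf_lt (by simpa using h)]
      omega

lemma filter_ne_eq_eraseIdx {e : List α} (he : e.Nodup) (x : α) :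
    e.filter (· ≠ x) = e.eraseIdx (e.idxOf x) := by
  rw [← List.erase_eq_eraseIdx_of_idxOf (l := e) (a := x) rfl, List.Nodup.erase_eq_filter he]
  apply List.filter_congr
  intro a _
  by_cases h : a = x <;> simp [h]

end DE

section LO
variable {α : Type*} [LinearOrder α]

/-- rank of `x` among the first `δ/2` distinct characters of `t`. -/
def Rank (δ : ℕ) (x : α) (t : List α) : ℕ :=
  (((firsts t).take (δ / 2)).filter (· ≤ x)).length

lemma rank_strict_mono {s : List α} (hs : s.Nodup) {y₁ y₂ : α} (h₂ : y₂ ∈ s)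
    (hlt : y₁ < y₂) : (s.filter (· ≤ y₁)).length < (s.filter (· ≤ y₂)).length := by
  have h1 : ∀ z : α, (s.filter (· ≤ z)).length =
      (s.toFinset.filter (fun w => w ≤ z)).card := by
    intro z
    rw [← List.toFinset_card_of_nodup (hs.filter _), List.toFinset_filter]
    congr 1
    apply Finset.filter_congr
    intro a _
    simp
  rw [h1, h1]
  apply Finset.card_lt_card
  constructor
  · intro w hw
    simp only [Finset.mem_filter] at hw ⊢
    exact ⟨hw.1, hw.2.trans hlt.le⟩
  · intro hsub
    have h2 : y₂ ∈ s.toFinset.filter (fun w => w ≤ y₂) := by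
      simp [List.mem_toFinset.2 h₂]
    have := hsub h2
    simp only [Finset.mem_filter] at this
    exact absurd this.2 (not_le.2 hlt)

lemma rank_inj {s : List α} (hs : s.Nodup) {y₁ y₂ : α} (h₁ : y₁ ∈ s) (h₂ : y₂ ∈ s)
    (h : (s.filter (· ≤ y₁)).length = (s.filter (· ≤ y₂)).length) : y₁ = y₂ := by
  rcases lt_trichotomy y₁ y₂ with h' | h' | h'
  · exact absurd h (Nat.ne_of_lt (rank_strict_mono hs h₂ h'))
  · exact h'
  · exact absurd h.symm (Nat.ne_of_lt (rank_strict_mono hs h₁ h'))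

lemma Fmap_fix {δ : ℕ} (hδeven : Even δ) (hδpos : 0 < δ) {x : α} {t : List α}
    (hlen : δ ≤ (x :: t).dedup.length)
    (hgood : ¬(x ∈ t ∧ (firsts t).idxOf x + 1 < δ / 2)) :
    Fmap δ (x :: t) = x :: t := by
  obtain ⟨m, hm⟩ := hδeven
  have hm2 : δ / 2 = m := by omega
  have hm1 : 1 ≤ m := by omega
  rw [Fmap, hm2]
  rcases Nat.lt_or_ge m 2 with h2 | h2
  · have h1 : m - 1 = 0 := by omega
    rw [h1, firsts_cons, List.getD_cons_zero, List.idxOf_cons_self]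
    simp
  · have hk : m - 1 = (m - 2) + 1 := by omega
    have hnodup := firsts_nodup t
    by_cases hxt : x ∈ t
    · -- then (firsts t).idxOf x + 1 ≥ m
      have hi : m - 1 ≤ (firsts t).idxOf x := by
        have := hgood
        push_neg at this
        have := this hxt
        omega
      have hxe : x ∈ firsts t := mem_firsts.2 hxt
      have hilen : (firsts t).idxOf x < (firsts t).length := List.idxOf_lt_length_iff.2 hxe
      have helen : δ ≤ (firsts t).length := by
        rw [length_firsts]
        rwa [List.dedup_cons_of_mem hxt] at hlen
      have herlen : m - 2 < ((firsts t).eraseIdx ((firsts t).idxOf x)).length := by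
        rw [List.length_eraseIdx, if_pos hilen]
        omega
      have hm2lt : m - 2 < (firsts t).length := by omega
      have hc : (firsts (x :: t)).getD (m - 1) x = (firsts t)[m-2] := by
        rw [firsts_cons, hk, List.getD_cons_succ, filter_ne_eq_eraseIdx hnodup,
          List.getD_eq_getElem _ _ herlen, List.getElem_eraseIdx]
        rw [dif_pos (by omega : m - 2 < (firsts t).idxOf x)]
      have hct : (firsts t)[m-2] ∈ t := mem_firsts.1 (List.getElem_mem _)
      have hcx : (firsts t)[m-2] ≠ x := by
        intro h
        have := List.Nodup.idxOf_getElem hnodup (m-2) hm2lt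
        rw [h] at this
        omega
      rw [hc, List.idxOf_cons_ne _ (Ne.symm hcx)]
      have hord : t.idxOf (firsts t)[m-2] < t.idxOf x := by
        have hx' : x = (firsts t)[(firsts t).idxOf x] :=
          (List.getElem_idxOf hilen).symm
        rw [hx']
        exact firsts_indexOf_mono hilen (by omega)
      have hcnt : (t.take (t.idxOf (firsts t)[m-2] + 1)).count x = 0 := by
        rw [List.count_eq_zero]
        intro hmem
        rw [mem_take_iff_indexOf_lt (by
          have : t.idxOf (firsts t)[m-2] < t.length := List.idxOf_lt_length_iff.2 hct
          omega)] at hmem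
        omega
      rw [if_pos]
      rw [Nat.succ_eq_add_one, List.take_succ_cons, List.count_cons_self, hcnt]
    · -- x ∉ t
      have hxe : x ∉ firsts t := fun h => hxt (mem_firsts.1 h)
      have hfe : (firsts t).filter (· ≠ x) = firsts t := by
        rw [List.filter_eq_self]
        intro a ha
        simp only [ne_eq, decide_eq_true_eq]
        intro h
        exact hxe (h ▸ ha)
      have helen : δ - 1 ≤ (firsts t).length := by
        rw [length_firsts]
        have : (x :: t).dedup.length ≤ t.dedup.length + 1 := by
          rw [List.dedup_cons_of_notMem (fun h => hxt h)]
          simp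
        omega
      have hm2lt : m - 2 < (firsts t).length := by omega
      have hc : (firsts (x :: t)).getD (m - 1) x = (firsts t)[m-2] := by
        rw [firsts_cons, hk, List.getD_cons_succ, hfe, List.getD_eq_getElem _ _ hm2lt]
      have hct : (firsts t)[m-2] ∈ t := mem_firsts.1 (List.getElem_mem _)
      have hcx : (firsts t)[m-2] ≠ x := fun h => hxt (h ▸ hct)
      rw [hc, List.idxOf_cons_ne _ (Ne.symm hcx)]
      have hcnt : (t.take (t.idxOf (firsts t)[m-2] + 1)).count x = 0 :=
        List.count_eq_zero.2 (fun h => hxt (List.take_subset _ _ h))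
      rw [if_pos]
      rw [Nat.succ_eq_add_one, List.take_succ_cons, List.count_cons_self, hcnt]

end LO
section LO2
variable {α : Type*} [LinearOrder α]

lemma Fmap_else {δ : ℕ} (hδeven : Even δ) (hδpos : 0 < δ) {x : α} {t : List α}
    (hlen : δ ≤ (x :: t).dedup.length)
    (hxt : x ∈ t) (hbad : (firsts t).idxOf x + 1 < δ / 2) :
    1 ≤ Rank δ x t ∧ Rank δ x t ≤ δ / 2 ∧
      δ / 2 + Rank δ x t - 1 < (firsts t).length ∧ δ ≤ (firsts t).length ∧
      Fmap δ (x :: t) = ((firsts t).getD (δ / 2 + Rank δ x t - 1) x) :: t := by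
  obtain ⟨m, hm⟩ := hδeven
  have hm2 : δ / 2 = m := by omega
  set e := firsts t with he
  set i := e.idxOf x with hi
  have hnodup : e.Nodup := firsts_nodup t
  have hxe : x ∈ e := mem_firsts.2 hxt
  have hilen : i < e.length := List.idxOf_lt_length_iff.2 hxe
  have hex : e[i] = x := List.getElem_idxOf hilen
  have helen : δ ≤ e.length := by
    rw [he, length_firsts]
    rwa [List.dedup_cons_of_mem hxt] at hlen
  rw [hm2] at hbad ⊢
  have h2 : 2 ≤ m := by omega
  have hk : m - 1 = (m - 2) + 1 := by omega
  have hibd : i + 1 < m := hbad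
  have herlen0 : (e.eraseIdx i).length = e.length - 1 := by
    rw [List.length_eraseIdx, if_pos hilen]
  have hm1lt : m - 2 + 1 < e.length := by omega
  have hc : (firsts (x :: t)).getD (m - 1) x = e[m-2+1] := by
    rw [firsts_cons, ← he, hk, List.getD_cons_succ, filter_ne_eq_eraseIdx hnodup, ← hi,
      List.getD_eq_getElem _ _ (by omega : m - 2 < (e.eraseIdx i).length),
      List.getElem_eraseIdx]
    rw [dif_neg (by omega : ¬ m - 2 < i)]
  have hct : e[m-2+1] ∈ t := mem_firsts.1 (List.getElem_mem _)
  have hcx : e[m-2+1] ≠ x := by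
    intro h
    have := List.Nodup.idxOf_getElem hnodup (m-2+1) hm1lt
    rw [h, ← hi] at this
    omega
  -- the branch condition is false
  have hord : t.idxOf x < t.idxOf e[m-2+1] := by
    conv_lhs => rw [← hex]
    exact firsts_indexOf_mono hm1lt (by omega)
  have hcnt : (t.take (t.idxOf e[m-2+1] + 1)).count x ≠ 0 := by
    intro h0
    rw [List.count_eq_zero] at h0
    apply h0
    rw [mem_take_iff_indexOf_lt (by
      have : t.idxOf e[m-2+1] < t.length := List.idxOf_lt_length_iff.2 hct
      omega)]
    omega
  -- d.take m is a permutation of e.take m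
  have hperm : ((firsts (x :: t)).take m).Perm (e.take m) := by
    rw [firsts_cons, ← he, filter_ne_eq_eraseIdx hnodup, ← hi]
    rw [show m = (m - 1) + 1 by omega, List.take_succ_cons,
      List.eraseIdx_eq_take_drop_succ, List.take_append,
      List.take_take, List.length_take]
    have hmin1 : min (m - 1) i = i := by omega
    have hmin2 : min i e.length = i := by omega
    rw [hmin1, hmin2]
    have htk : e.take ((m-1) + 1) = e.take i ++ (x :: (e.drop (i+1)).take (m - 1 - i)) := by
      rw [show (m-1) + 1 = i + ((m - i - 1) + 1) by omega, List.take_add]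
      congr 1
      rw [List.drop_eq_getElem_cons hilen, hex, List.take_succ_cons]
      congr 2
      omega
    rw [htk]
    exact (List.perm_middle).symm
  have hrank : ((firsts (x :: t)).take m |>.filter (· ≤ x)).length = Rank δ x t := by
    rw [Rank, hm2, ← he]
    exact (hperm.filter _).length_eq
  have hr1 : 1 ≤ Rank δ x t := by
    rw [Rank, hm2, ← he]
    have hxm : x ∈ e.take m := by
      rw [mem_take_iff_indexOf_lt (by omega), ← hi]
      omega
    have : x ∈ (e.take m).filter (· ≤ x) := List.mem_filter.2 ⟨hxm, by simp⟩
    exact List.length_pos_iff.2 (List.ne_nil_of_mem this)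
  have hrm : Rank δ x t ≤ m := by
    rw [Rank, hm2, ← he]
    exact le_trans (List.length_filter_le _ _) (by
      rw [List.length_take]; omega)
  have hidx : m + Rank δ x t - 1 < e.length := by omega
  refine ⟨hr1, hrm, hidx, helen, ?_⟩
  rw [Fmap, hm2, hc, List.idxOf_cons_ne _ (Ne.symm hcx)]
  rw [if_neg (by
    rw [Nat.succ_eq_add_one, List.take_succ_cons, List.count_cons_self]
    omega)]
  dsimp only
  rw [hrank]
  congr 1
  have hK : m + Rank δ x t - 1 = (m + Rank δ x t - 2) + 1 := by omega
  rw [hK]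
  rw [firsts_cons, ← he, filter_ne_eq_eraseIdx hnodup, ← hi, List.getD_cons_succ]
  rw [List.getD_eq_getElem _ _ (by omega : m + Rank δ x t - 2 < (e.eraseIdx i).length),
    List.getD_eq_getElem _ _ (by omega : m + Rank δ x t - 2 + 1 < e.length),
    List.getElem_eraseIdx, dif_neg (by omega : ¬ m + Rank δ x t - 2 < i)]

end LO2
section LO3
variable {α : Type*} [LinearOrder α]

lemma Fmap_shape (δ : ℕ) (x : α) (t : List α) : ∃ z, Fmap δ (x :: t) = z :: t := by
  rw [Fmap]
  split
  · exact ⟨x, rfl⟩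
  · exact ⟨_, rfl⟩

lemma Fmap_main {δ : ℕ} (hδeven : Even δ) (hδpos : 0 < δ) {P : List α}
    (hlen : δ ≤ P.dedup.length) :
    (Fmap δ P).length = P.length ∧ (Fmap δ P).dedup.length = P.dedup.length ∧
      Fmap δ (Fmap δ P) = Fmap δ P := by
  obtain ⟨x, t, rfl⟩ : ∃ x t, P = x :: t := by
    cases P with
    | nil => simp at hlen; omega
    | cons x t => exact ⟨x, t, rfl⟩
  by_cases hbad : x ∈ t ∧ (firsts t).idxOf x + 1 < δ / 2
  · obtain ⟨h1, h2, h3, h4, h5⟩ := Fmap_else hδeven hδpos hlen hbad.1 hbad.2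
    have hbe : (firsts t).getD (δ/2 + Rank δ x t - 1) x
        = (firsts t)[δ/2 + Rank δ x t - 1] := List.getD_eq_getElem _ _ h3
    have hbt : (firsts t).getD (δ/2 + Rank δ x t - 1) x ∈ t := by
      rw [hbe]; exact mem_firsts.1 (List.getElem_mem _)
    rw [h5]
    have hded : ((firsts t).getD (δ/2 + Rank δ x t - 1) x :: t).dedup.length
        = (x :: t).dedup.length := by
      rw [List.dedup_cons_of_mem hbt, List.dedup_cons_of_mem hbad.1]
    refine ⟨by simp, hded, ?_⟩
    apply Fmap_fix hδeven hδpos (by rw [hded]; exact hlen)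
    rintro ⟨hmem, hidx⟩
    have hio : (firsts t).idxOf ((firsts t).getD (δ/2 + Rank δ x t - 1) x)
        = δ/2 + Rank δ x t - 1 := by
      rw [hbe]
      exact List.Nodup.idxOf_getElem (firsts_nodup t) _ h3
    omega
  · have hfix := Fmap_fix hδeven hδpos hlen hbad
    rw [hfix]
    exact ⟨rfl, rfl, hfix⟩

lemma Fmap_inj {δ : ℕ} (hδeven : Even δ) (hδpos : 0 < δ) {t : List α} {x₁ x₂ : α}
    (hlen₁ : δ ≤ (x₁ :: t).dedup.length) (hlen₂ : δ ≤ (x₂ :: t).dedup.length)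
    (hne₁ : Fmap δ (x₁ :: t) ≠ x₁ :: t) (hne₂ : Fmap δ (x₂ :: t) ≠ x₂ :: t)
    (heq : Fmap δ (x₁ :: t) = Fmap δ (x₂ :: t)) : x₁ = x₂ := by
  have hbad₁ : x₁ ∈ t ∧ (firsts t).idxOf x₁ + 1 < δ / 2 := by
    by_contra h
    exact hne₁ (Fmap_fix hδeven hδpos hlen₁ h)
  have hbad₂ : x₂ ∈ t ∧ (firsts t).idxOf x₂ + 1 < δ / 2 := by
    by_contra h
    exact hne₂ (Fmap_fix hδeven hδpos hlen₂ h)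
  obtain ⟨h11, h12, h13, h14, h15⟩ := Fmap_else hδeven hδpos hlen₁ hbad₁.1 hbad₁.2
  obtain ⟨h21, h22, h23, h24, h25⟩ := Fmap_else hδeven hδpos hlen₂ hbad₂.1 hbad₂.2
  rw [h15, h25, List.cons.injEq] at heq
  have hhd := heq.1
  rw [List.getD_eq_getElem _ _ h13, List.getD_eq_getElem _ _ h23] at hhd
  have hk₁ := List.Nodup.idxOf_getElem (firsts_nodup t) _ h13
  have hk₂ := List.Nodup.idxOf_getElem (firsts_nodup t) _ h23
  rw [hhd] at hk₁
  have hreq : Rank δ x₁ t = Rank δ x₂ t := by omega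
  have hnds : ((firsts t).take (δ/2)).Nodup :=
    (firsts_nodup t).sublist (List.take_sublist _ _)
  have hm₁ : x₁ ∈ (firsts t).take (δ/2) := by
    rw [mem_take_iff_indexOf_lt (by omega)]
    omega
  have hm₂ : x₂ ∈ (firsts t).take (δ/2) := by
    rw [mem_take_iff_indexOf_lt (by omega)]
    omega
  exact rank_inj hnds hm₁ hm₂ hreq

end LO3

/-- Every string in the image of `F` on `𝒫(δ)` (length-`n` strings with at least `δ` distinct
characters) again has length `n` and at least `δ` distinct characters; each `Q` in the image has
at most two preimages, one of which is `Q` itself; consequently `|F(𝒫(δ))| ≥ |𝒫(δ)|/2`. -/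
theorem stmt16 {α : Type*} [LinearOrder α] [Fintype α] (n δ Δ : ℕ)
    (hΔ : Fintype.card α = Δ) (hδeven : Even δ) (hδΔ : δ ≤ Δ) (hδpos : 0 < δ)
    (Pset : Set (List α)) (hPset : Pset = {P : List α | P.length = n ∧ δ ≤ P.dedup.length}) :
    (∀ Q ∈ Fmap δ '' Pset, Q.length = n ∧ δ ≤ Q.dedup.length) ∧
    (∀ Q ∈ Fmap δ '' Pset,
      {P | P ∈ Pset ∧ Fmap δ P = Q}.ncard ≤ 2 ∧ Q ∈ Pset ∧ Fmap δ Q = Q) ∧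
    Pset.ncard ≤ 2 * (Fmap δ '' Pset).ncard := by
  classical
  have hmem : ∀ P : List α, P ∈ Pset ↔ P.length = n ∧ δ ≤ P.dedup.length := by
    intro P; rw [hPset]; exact Iff.rfl
  have hkey : ∀ P ∈ Pset, Fmap δ P ∈ Pset ∧ Fmap δ (Fmap δ P) = Fmap δ P := by
    intro P hP
    obtain ⟨h1, h2, h3⟩ := Fmap_main hδeven hδpos ((hmem P).1 hP).2
    refine ⟨(hmem _).2 ⟨by rw [h1]; exact ((hmem P).1 hP).1, by rw [h2]; exact ((hmem P).1 hP).2⟩, h3⟩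
  have hne_nil : ∀ P ∈ Pset, P ≠ [] := by
    intro P hP h
    have := ((hmem P).1 hP).2
    rw [h] at this
    simp at this
    omega
  -- fiber bound
  have hfiber : ∀ Q ∈ Fmap δ '' Pset, {P | P ∈ Pset ∧ Fmap δ P = Q}.ncard ≤ 2 := by
    rintro Q ⟨P, hP, rfl⟩
    set Q := Fmap δ P with hQdef
    have hQmem : Q ∈ Pset := (hkey P hP).1
    have hQfix : Fmap δ Q = Q := (hkey P hP).2
    by_cases hex : ∃ P₀, P₀ ∈ Pset ∧ Fmap δ P₀ = Q ∧ P₀ ≠ Q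
    · obtain ⟨P₀, hP₀S, hP₀F, hP₀ne⟩ := hex
      have hsub : {P' | P' ∈ Pset ∧ Fmap δ P' = Q} ⊆ {Q, P₀} := by
        rintro P' ⟨hP'S, hP'F⟩
        by_cases h : P' = Q
        · exact Or.inl h
        · right
          obtain ⟨y, t', rfl⟩ : ∃ y t', P' = y :: t' := by
            cases P' with
            | nil => exact absurd rfl (hne_nil _ hP'S)
            | cons y t' => exact ⟨y, t', rfl⟩
          obtain ⟨z, t₀, rfl⟩ : ∃ z t₀, P₀ = z :: t₀ := by
            cases P₀ with
            | nil => exact absurd rfl (hne_nil _ hP₀S)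
            | cons z t₀ => exact ⟨z, t₀, rfl⟩
          obtain ⟨c', hc'⟩ := Fmap_shape δ y t'
          obtain ⟨c₀, hc₀⟩ := Fmap_shape δ z t₀
          have ht : t' = t₀ := by
            have e1 : Q = c' :: t' := by rw [← hP'F, hc']
            have e2 : Q = c₀ :: t₀ := by rw [← hP₀F, hc₀]
            rw [e1, List.cons.injEq] at e2
            exact e2.2
          subst ht
          have hy : y = z := by
            apply Fmap_inj hδeven hδpos ((hmem _).1 hP'S).2 ((hmem _).1 hP₀S).2
            · intro hfix
              exact h (by rw [← hP'F, hfix])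
            · intro hfix
              exact hP₀ne (by rw [← hP₀F, hfix])
            · rw [hP'F, hP₀F]
          rw [hy]
          exact rfl
      calc {P' | P' ∈ Pset ∧ Fmap δ P' = Q}.ncard
          ≤ ({Q, P₀} : Set (List α)).ncard :=
            Set.ncard_le_ncard hsub ((Set.finite_singleton P₀).insert Q)
        _ ≤ ({P₀} : Set (List α)).ncard + 1 := Set.ncard_insert_le _ _
        _ ≤ 2 := by rw [Set.ncard_singleton]
    · push_neg at hex
      have hsub : {P' | P' ∈ Pset ∧ Fmap δ P' = Q} ⊆ {Q} := by
        rintro P' ⟨hP'S, hP'F⟩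
        by_cases h : P' = Q
        · exact h
        · exact absurd (hex P' hP'S hP'F) h
      calc {P' | P' ∈ Pset ∧ Fmap δ P' = Q}.ncard
          ≤ ({Q} : Set (List α)).ncard := Set.ncard_le_ncard hsub (Set.finite_singleton Q)
        _ ≤ 2 := by rw [Set.ncard_singleton]; omega
  refine ⟨?_, ?_, ?_⟩
  · rintro Q ⟨P, hP, rfl⟩
    exact (hmem _).1 (hkey P hP).1
  · rintro Q hQ
    obtain ⟨P, hP, rfl⟩ := hQ
    exact ⟨hfiber _ ⟨P, hP, rfl⟩, (hkey P hP).1, (hkey P hP).2⟩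
  · have hfin : Pset.Finite := by
      apply (List.finite_length_eq α n).subset
      intro P hP
      exact ((hmem P).1 hP).1
    have hset : ↑hfin.toFinset = Pset := hfin.coe_toFinset
    have himg : Fmap δ '' Pset = ↑(hfin.toFinset.image (Fmap δ)) := by
      rw [Finset.coe_image, hset]
    rw [Set.ncard_eq_toFinset_card Pset hfin, himg, Set.ncard_coe_finset]
    apply Finset.card_le_mul_card_image
    intro b hb
    have hbQ : b ∈ Fmap δ '' Pset := by
      rw [himg]
      exact_mod_cast hb
    have hcard : (hfin.toFinset.filter (fun a => Fmap δ a = b)).card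
        = {P | P ∈ Pset ∧ Fmap δ P = b}.ncard := by
      rw [← Set.ncard_coe_finset]
      congr 1
      ext P
      simp only [Finset.coe_filter, Set.mem_setOf_eq, Set.Finite.mem_toFinset]
    rw [hcard]
    exact hfiber b hbQ
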